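/- Let (Z, Y, H, X) be a pre-wreath structure and let G be a subgroup of Sym(Z) whose support is contained in X. Let K be the subgroup of Sym(Z) generated by all conjugates j⁻¹Gj with j ∈ H. Then there exists a group homomorphism φ from ⟨G, H⟩ to H that restricts to the identity on H and whose kernel is exactly K. In particular K is a normal subgroup of ⟨G, H⟩, K ∩ H = {1}, and ⟨G, H⟩ = K·H. -/

import Mathlib

/-- A pre-wreath structure `(Z, Y, H, X)`: `H` is a nontrivial subgroup of `Sym(Z)`,
`X ⊆ Y ⊆ Z`, `X` nonempty, every element of `H` fixes every point outside `Y`,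
if `Xh` meets `X` then `h` is the identity on `X`, and every nontrivial `h ∈ H`
moves some set `Xj` (`j ∈ H`). (Images are written with Lean's left action, so the
set `Xh` of the paper is `⇑h '' X`.) -/
def IsPreWreath {Z : Type*} (Y : Set Z) (H : Subgroup (Equiv.Perm Z)) (X : Set Z) : Prop :=
  H ≠ ⊥ ∧
  (∀ h ∈ H, ∀ z : Z, z ∉ Y → h z = z) ∧
  X ⊆ Y ∧
  X.Nonempty ∧
  (∀ h ∈ H, (⇑h '' X ∩ X).Nonempty → ∀ x ∈ X, h x = x) ∧
  (∀ h ∈ H, h ≠ 1 → ∃ j ∈ H, ⇑h '' (⇑j '' X) ≠ ⇑j '' X)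

/-- The carrier `XH = {Xh : h ∈ H}` of a pre-wreath structure. -/
def wreathCarrier {Z : Type*} (H : Subgroup (Equiv.Perm Z)) (X : Set Z) : Set (Set Z) :=
  {A : Set Z | ∃ h ∈ H, A = ⇑h '' X}

/-- The support of a subgroup of `Sym(Z)`: the points moved by some element. -/
def Supp {Z : Type*} (K : Subgroup (Equiv.Perm Z)) : Set Z :=
  {z : Z | ∃ g ∈ K, g z ≠ z}

namespace Stmt7Aux

variable {Z : Type*} {Y X : Set Z} {H G : Subgroup (Equiv.Perm Z)}

/-- Two blocks are equal or disjoint. -/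
lemma block_eq (hpw : IsPreWreath Y H X) {a b : Equiv.Perm Z} (ha : a ∈ H) (hb : b ∈ H)
    (hne : (⇑a '' X ∩ ⇑b '' X).Nonempty) : ⇑a '' X = ⇑b '' X := by
  obtain ⟨-, -, -, -, h5, -⟩ := hpw
  obtain ⟨z, ⟨x, hx, hzx⟩, ⟨x', hx', hzx'⟩⟩ := hne
  have hmem : b⁻¹ * a ∈ H := mul_mem (inv_mem hb) ha
  have hba : (b⁻¹ * a) x = x' := by
    simp only [Equiv.Perm.mul_apply, hzx, ← hzx', Equiv.Perm.coe_inv, Equiv.symm_apply_apply]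
  have hid : ∀ y ∈ X, (b⁻¹ * a) y = y :=
    h5 _ hmem ⟨x', ⟨x, hx, hba⟩, hx'⟩
  apply Set.image_congr
  intro y hy
  have := hid y hy
  simp only [Equiv.Perm.mul_apply] at this
  have := congrArg b this
  simpa using this

lemma g_mem_X (hG : Supp G ⊆ X) {g : Equiv.Perm Z} (hg : g ∈ G) {x : Z} (hx : x ∈ X) :
    g x ∈ X := by
  by_cases h : g x = x
  · rwa [h]
  · refine hG ⟨g⁻¹, inv_mem hg, ?_⟩
    simp only [Equiv.Perm.coe_inv, Equiv.symm_apply_apply]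
    exact fun hc => h hc.symm

lemma g_fix (hG : Supp G ⊆ X) {g : Equiv.Perm Z} (hg : g ∈ G) {z : Z} (hz : z ∉ X) :
    g z = z := by
  by_contra h
  exact hz (hG ⟨g, hg, h⟩)

lemma g_image (hG : Supp G ⊆ X) {g : Equiv.Perm Z} (hg : g ∈ G) : ⇑g '' X = X := by
  apply Set.eq_of_subset_of_subset
  · rintro _ ⟨x, hx, rfl⟩; exact g_mem_X hG hg hx
  · intro x hx
    exact ⟨g⁻¹ x, g_mem_X hG (inv_mem hg) hx, by simp⟩

/-- Generators of K preserve every block. -/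
lemma gen_block (hpw : IsPreWreath Y H X) (hG : Supp G ⊆ X)
    {g j a : Equiv.Perm Z} (hg : g ∈ G) (hj : j ∈ H) (ha : a ∈ H) :
    ⇑(j⁻¹ * g * j) '' (⇑a '' X) = ⇑a '' X := by
  by_cases hcase : ⇑a '' X = ⇑j⁻¹ '' X
  · rw [hcase]
    have h1 : ⇑(j⁻¹ * g * j) '' (⇑j⁻¹ '' X) = ⇑j⁻¹ '' (⇑g '' X) := by
      rw [← Set.image_comp, ← Set.image_comp]
      apply congrFun
      apply congrArg
      funext z
      simp [Equiv.Perm.mul_apply]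
    rw [h1, g_image hG hg]
  · have hdisj : ∀ z ∈ ⇑a '' X, z ∉ ⇑j⁻¹ '' X := by
      intro z hz hz'
      exact hcase (block_eq hpw ha (inv_mem hj) ⟨z, hz, hz'⟩)
    have hfix : ∀ z ∈ ⇑a '' X, (j⁻¹ * g * j) z = z := by
      intro z hz
      have hjz : j z ∉ X := by
        intro hc
        exact hdisj z hz ⟨j z, hc, by simp⟩
      have : g (j z) = j z := g_fix hG hg hjz
      simp [Equiv.Perm.mul_apply, this]
    calc ⇑(j⁻¹ * g * j) '' (⇑a '' X) = id '' (⇑a '' X) := Set.image_congr hfix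
      _ = ⇑a '' X := Set.image_id _

end Stmt7Aux

/-- Let `(Z, Y, H, X)` be a pre-wreath structure and `G ≤ Sym(Z)` with
support in `X`.  Let `K` be the subgroup generated by the conjugates `j⁻¹ g j`
(`g ∈ G`, `j ∈ H`).  Then there is a homomorphism `φ : ⟨G, H⟩ →* H` restricting to the
identity on `H` with kernel exactly `K`; in particular `K` is normal in `⟨G, H⟩`,
`K ∩ H = 1`, and `⟨G, H⟩ = K·H`. -/


theorem stmt7 {Z : Type*} (Y X : Set Z) (H G : Subgroup (Equiv.Perm Z))
    (hpw : IsPreWreath Y H X) (hG : Supp G ⊆ X) :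
    ∃ φ : (G ⊔ H : Subgroup (Equiv.Perm Z)) →* H,
      (∀ (h : Equiv.Perm Z) (hh : h ∈ H) (hw : h ∈ G ⊔ H),
        ((φ ⟨h, hw⟩ : H) : Equiv.Perm Z) = h) ∧
      (∀ w : (G ⊔ H : Subgroup (Equiv.Perm Z)), φ w = 1 ↔
        (w : Equiv.Perm Z) ∈
          Subgroup.closure {x : Equiv.Perm Z | ∃ g ∈ G, ∃ j ∈ H, x = j⁻¹ * g * j}) ∧
      (Subgroup.closure {x : Equiv.Perm Z | ∃ g ∈ G, ∃ j ∈ H, x = j⁻¹ * g * j} ≤ G ⊔ H) ∧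
      (∀ w ∈ G ⊔ H, ∀ k ∈
          Subgroup.closure {x : Equiv.Perm Z | ∃ g ∈ G, ∃ j ∈ H, x = j⁻¹ * g * j},
        w * k * w⁻¹ ∈
          Subgroup.closure {x : Equiv.Perm Z | ∃ g ∈ G, ∃ j ∈ H, x = j⁻¹ * g * j}) ∧
      (Subgroup.closure {x : Equiv.Perm Z | ∃ g ∈ G, ∃ j ∈ H, x = j⁻¹ * g * j} ⊓ H = ⊥) ∧
      (∀ w ∈ G ⊔ H, ∃ k ∈
          Subgroup.closure {x : Equiv.Perm Z | ∃ g ∈ G, ∃ j ∈ H, x = j⁻¹ * g * j},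
        ∃ h ∈ H, w = k * h) := by
  set S : Set (Equiv.Perm Z) := {x : Equiv.Perm Z | ∃ g ∈ G, ∃ j ∈ H, x = j⁻¹ * g * j} with hS
  set K : Subgroup (Equiv.Perm Z) := Subgroup.closure S with hK
  -- every element of K preserves every block
  have K_block : ∀ k ∈ K, ∀ a ∈ H, ⇑k '' (⇑a '' X) = ⇑a '' X := by
    intro k hk
    refine Subgroup.closure_induction ?_ ?_ ?_ ?_ hk
    · rintro x ⟨g, hg, j, hj, rfl⟩ a ha
      exact Stmt7Aux.gen_block hpw hG hg hj ha
    · intro a ha; simp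
    · intro x y hx hy px py a ha
      rw [Equiv.Perm.coe_mul, Set.image_comp, py a ha, px a ha]
    · intro x hx px a ha
      have := px a ha
      calc ⇑x⁻¹ '' (⇑a '' X) = ⇑x⁻¹ '' (⇑x '' (⇑a '' X)) := by rw [this]
        _ = ⇑a '' X := by
            rw [← Set.image_comp]
            simp [Function.comp]
  -- conjugation by elements of H preserves K
  have conjH : ∀ h ∈ H, ∀ k ∈ K, h⁻¹ * k * h ∈ K := by
    intro h hh k hk
    refine Subgroup.closure_induction ?_ ?_ ?_ ?_ hk
    · rintro x ⟨g, hg, j, hj, rfl⟩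
      have : h⁻¹ * (j⁻¹ * g * j) * h = (j * h)⁻¹ * g * (j * h) := by group
      rw [this]
      exact Subgroup.subset_closure ⟨g, hg, j * h, mul_mem hj hh, rfl⟩
    · simpa using one_mem K
    · intro x y hx hy px py
      have : h⁻¹ * (x * y) * h = (h⁻¹ * x * h) * (h⁻¹ * y * h) := by group
      rw [this]; exact mul_mem px py
    · intro x hx px
      have : h⁻¹ * x⁻¹ * h = (h⁻¹ * x * h)⁻¹ := by group
      rw [this]; exact inv_mem px
  have G_le_K : ∀ g ∈ G, g ∈ K := fun g hg =>
    Subgroup.subset_closure ⟨g, hg, 1, one_mem H, by group⟩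
  have K_le : K ≤ G ⊔ H := by
    rw [hK]
    apply Subgroup.closure_le _ |>.mpr
    rintro x ⟨g, hg, j, hj, rfl⟩
    exact mul_mem (mul_mem (inv_mem (Subgroup.mem_sup_right hj)) (Subgroup.mem_sup_left hg))
      (Subgroup.mem_sup_right hj)
  -- K ⊓ H = ⊥
  have KinterH : K ⊓ H = ⊥ := by
    rw [eq_bot_iff]
    rintro h ⟨hhK, hhH⟩
    simp only [Subgroup.mem_bot]
    by_contra hne
    obtain ⟨-, -, -, -, -, h6⟩ := hpw
    obtain ⟨j, hj, hcontra⟩ := h6 h hhH hne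
    exact hcontra (K_block h hhK j hj)
  -- conjugation stability under G ⊔ H
  have norm : ∀ w ∈ G ⊔ H, ∀ k ∈ K, w * k * w⁻¹ ∈ K ∧ w⁻¹ * k * w ∈ K := by
    intro w hw
    rw [Subgroup.sup_eq_closure] at hw
    refine Subgroup.closure_induction ?_ ?_ ?_ ?_ hw
    · rintro x (hx | hx)
      · intro k hk
        constructor
        · exact mul_mem (mul_mem (G_le_K x hx) hk) (inv_mem (G_le_K x hx))
        · exact mul_mem (mul_mem (inv_mem (G_le_K x hx)) hk) (G_le_K x hx)
      · intro k hk
        constructor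
        · have := conjH x⁻¹ (inv_mem hx) k hk
          simpa using this
        · exact conjH x hx k hk
    · intro k hk
      refine ⟨?_, ?_⟩ <;> simpa using hk
    · intro x y hx hy px py k hk
      constructor
      · have h1 : x * y * k * (x * y)⁻¹ = x * (y * k * y⁻¹) * x⁻¹ := by group
        rw [h1]; exact (px _ ((py k hk).1)).1
      · have h1 : (x * y)⁻¹ * k * (x * y) = y⁻¹ * (x⁻¹ * k * x) * y := by group
        rw [h1]; exact (py _ ((px k hk).2)).2
    · intro x hx px k hk
      constructor
      · exact (px k hk).2
      · simpa using (px k hk).1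
  -- decomposition
  have decomp : ∀ w ∈ G ⊔ H, ∃ k ∈ K, ∃ h ∈ H, w = k * h := by
    intro w hw
    rw [Subgroup.sup_eq_closure] at hw
    refine Subgroup.closure_induction ?_ ?_ ?_ ?_ hw
    · rintro x (hx | hx)
      · exact ⟨x, G_le_K x hx, 1, one_mem H, by group⟩
      · exact ⟨1, one_mem K, x, hx, by group⟩
    · exact ⟨1, one_mem K, 1, one_mem H, by group⟩
    · rintro x y hx hy ⟨k1, hk1, h1, hh1, rfl⟩ ⟨k2, hk2, h2, hh2, rfl⟩
      refine ⟨k1 * (h1 * k2 * h1⁻¹), ?_, h1 * h2, mul_mem hh1 hh2, by group⟩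
      refine mul_mem hk1 ?_
      have := conjH h1⁻¹ (inv_mem hh1) k2 hk2
      simpa using this
    · rintro x hx ⟨k, hk, h, hh, rfl⟩
      refine ⟨h⁻¹ * k⁻¹ * h, ?_, h⁻¹, inv_mem hh, by group⟩
      exact conjH h hh k⁻¹ (inv_mem hk)
  -- uniqueness of decomposition
  have uniq : ∀ k ∈ K, ∀ k' ∈ K, ∀ h ∈ H, ∀ h' ∈ H, k * h = k' * h' → h = h' := by
    intro k hk k' hk' h hh h' hh' heq
    have hmem : k'⁻¹ * k ∈ K := mul_mem (inv_mem hk') hk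
    have heq2 : k'⁻¹ * k = h' * h⁻¹ := by
      have := congrArg (fun x => k'⁻¹ * x * h⁻¹) heq
      simpa [mul_assoc] using this
    have hmem2 : k'⁻¹ * k ∈ H := heq2 ▸ mul_mem hh' (inv_mem hh)
    have hbot : k'⁻¹ * k ∈ (⊥ : Subgroup (Equiv.Perm Z)) := KinterH ▸ ⟨hmem, hmem2⟩
    rw [Subgroup.mem_bot] at hbot
    rw [heq2] at hbot
    have := congrArg (fun x => x * h) hbot
    simpa using this.symm
  -- build φ
  have hdecomp' : ∀ w : (G ⊔ H : Subgroup (Equiv.Perm Z)),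
      ∃ h : H, ∃ k, k ∈ K ∧ (w : Equiv.Perm Z) = k * h := by
    intro w
    obtain ⟨k, hk, h, hh, heq⟩ := decomp w w.2
    exact ⟨⟨h, hh⟩, k, hk, heq⟩
  choose f kf hkf heqf using hdecomp'
  have fmul : ∀ a b : (G ⊔ H : Subgroup (Equiv.Perm Z)), f (a * b) = f a * f b := by
    intro a b
    have h1 : ((a * b : (G ⊔ H : Subgroup (Equiv.Perm Z))) : Equiv.Perm Z)
        = (kf a * ((f a : Equiv.Perm Z) * kf b * (f a : Equiv.Perm Z)⁻¹))
          * ((f a : Equiv.Perm Z) * (f b : Equiv.Perm Z)) := by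
      push_cast
      rw [heqf a, heqf b]
      group
    have hmemk : (kf a * ((f a : Equiv.Perm Z) * kf b * (f a : Equiv.Perm Z)⁻¹)) ∈ K := by
      refine mul_mem (hkf a) ?_
      have := conjH (f a : Equiv.Perm Z)⁻¹ (inv_mem (f a).2) (kf b) (hkf b)
      simpa using this
    have := uniq _ (hkf (a * b)) _ hmemk _ (f (a * b)).2 _ (mul_mem (f a).2 (f b).2)
      (by rw [← heqf (a * b), h1])
    exact Subtype.ext this
  refine ⟨MonoidHom.mk' f fmul, ?_, ?_, K_le, fun w hw k hk => (norm w hw k hk).1, KinterH, decomp⟩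
  · intro h hh hw
    have := uniq _ (hkf ⟨h, hw⟩) _ (one_mem K) _ (f ⟨h, hw⟩).2 _ hh
      (by rw [← heqf ⟨h, hw⟩]; simp)
    exact this
  · intro w
    constructor
    · intro hone
      have hf1 : f w = 1 := hone
      have h2 := heqf w
      rw [hf1, OneMemClass.coe_one, mul_one] at h2
      rw [h2]
      exact hkf w
    · intro hwK
      have := uniq _ (hkf w) _ hwK _ (f w).2 _ (one_mem H)
        (by rw [← heqf w]; group)
      show f w = 1
      exact Subtype.ext (by simpa using this)
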